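/- Let n be a positive integer such that S = lspec(n) is balanced, and let a ∈ E(S). Then: (i) a has a prime factor strictly smaller than a; in particular, a is not prime; (ii) every divisor of a other than a itself belongs to S₁; (iii) a/m₁ = q(m₁·a). -/
import Mathlib


/-- The length spectrum of `n`: the set of lengths `l` of decompositions of `n`,
i.e. sequences `a, a+1, ..., a+(l-1)` of `l ≥ 1` consecutive positive integers summing to `n`. -/
def lspec (n : ℕ) : Set ℕ :=
  {l | 0 < l ∧ ∃ a : ℕ, 0 < a ∧ ∑ i ∈ Finset.range l, (a + i) = n}

/-- `A₀`: the even elements of `A`. -/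
def evens (A : Set ℕ) : Set ℕ := {x ∈ A | Even x}

/-- `A₁`: the odd elements of `A`. -/
def odds (A : Set ℕ) : Set ℕ := {x ∈ A | Odd x}

/-- The spectral class of `n`: positive integers with the same length spectrum as `n`. -/
def specClass (n : ℕ) : Set ℕ := {m | 0 < m ∧ lspec m = lspec n}

/-- A set is balanced if it has equally many even and odd elements. -/
def balancedSet (S : Set ℕ) : Prop := (evens S).encard = (odds S).encard

/-- A set is unmixed if it has no even elements. -/
def unmixedSet (S : Set ℕ) : Prop := evens S = ∅

/-- A set is lopsided if it is neither balanced nor unmixed. -/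
def lopsidedSet (S : Set ℕ) : Prop := ¬ balancedSet S ∧ ¬ unmixedSet S

/-- The set of ratios `m'/m` over pairs of complementary factors `m ≤ m'` of `k`;
`q(k)` is the least element of this set. -/
def qSet (k : ℕ) : Set ℚ :=
  {r | ∃ m m' : ℕ, 0 < m ∧ m ≤ m' ∧ m * m' = k ∧ r = (m' : ℚ) / (m : ℚ)}

/-- The exceptional set `E(S)`: numbers `a = b·c` with `b, c ∈ S₁`, `a > max S₀`, and
whose set of divisors of `(max S₁)·a` strictly below `a` is exactly `S₁`. -/
def excSet (S : Set ℕ) : Set ℕ :=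
  {a | (∃ b ∈ odds S, ∃ c ∈ odds S, a = b * c) ∧ sSup (evens S) < a ∧
    {d | d ∣ sSup (odds S) * a ∧ d < a} = odds S}

/-- `P(S)`: the primes strictly greater than `max S₀`. -/
def primesAbove (S : Set ℕ) : Set ℕ := {p | p.Prime ∧ sSup (evens S) < p}

/-- A balanced spectrum is non-excessive if `S₁` is exactly the set of divisors of `max S₁`. -/
def nonExcessive (S : Set ℕ) : Prop := odds S = {d | d ∣ sSup (odds S)}

/-- `γ_p`: the largest `k` with `p^k ∈ S₁`. -/
noncomputable def gammaIdx (S : Set ℕ) (p : ℕ) : ℕ := sSup {k | p ^ k ∈ odds S}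

/-- `μ_p = v_p(max S₁)`. -/
noncomputable def muIdx (S : Set ℕ) (p : ℕ) : ℕ := (sSup (odds S)).factorization p

/-- The excessive index `ε_p = γ_p − μ_p` of a prime `p` with respect to `S`. -/
noncomputable def excIdx (S : Set ℕ) (p : ℕ) : ℕ := gammaIdx S p - muIdx S p

/-- The difference set `D(S)`: `S₁` with its `|S₀|` smallest elements removed when
`|S₀| ≤ |S₁|`, and empty otherwise.  An element `x` of `S₁` survives exactly when at least
`|S₀|` elements of `S₁` lie strictly below it. -/
def diffSet (S : Set ℕ) : Set ℕ :=
  {x ∈ odds S | (evens S).encard ≤ {y ∈ odds S | y < x}.encard}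
/-- Basic facts about elements of the exceptional set of a balanced spectrum:
(i) `a` has a proper prime factor (so `a` is not prime); (ii) every proper divisor of `a`
lies in `S₁`; (iii) `a / m₁ = q(m₁ · a)`. -/
theorem excSet_facts (n a : ℕ) (hn : 0 < n) (hb : balancedSet (lspec n))
    (ha : a ∈ excSet (lspec n)) :
    (∃ p : ℕ, p.Prime ∧ p ∣ a ∧ p < a) ∧ ¬ a.Prime ∧
      (∀ d : ℕ, d ∣ a → d ≠ a → d ∈ odds (lspec n)) ∧
      IsLeast (qSet (sSup (odds (lspec n)) * a))
        ((a : ℚ) / ((sSup (odds (lspec n)) : ℕ) : ℚ)) := by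
  obtain ⟨⟨b, hb1, c, hc1, habc⟩, hagt, hdiv⟩ := ha
  -- lspec n is bounded
  have hsub : lspec n ⊆ Set.Iic n := by
    rintro l ⟨hl, x, hx, hsum⟩
    have : l ≤ ∑ i ∈ Finset.range l, (x + i) := by
      calc l = ∑ _i ∈ Finset.range l, 1 := by simp
        _ ≤ ∑ i ∈ Finset.range l, (x + i) := by
            exact Finset.sum_le_sum fun i _ => by omega
    simpa [hsum] using this
  have hbddO : BddAbove (odds (lspec n)) :=
    ⟨n, fun x hx => hsub hx.1⟩
  have hbddE : BddAbove (evens (lspec n)) :=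
    ⟨n, fun x hx => hsub hx.1⟩
  have h1 : (1 : ℕ) ∈ odds (lspec n) :=
    ⟨⟨one_pos, n, hn, by simp⟩, odd_one⟩
  set m₁ := sSup (odds (lspec n)) with hm₁def
  have hm₁mem : m₁ ∈ odds (lspec n) := Nat.sSup_mem ⟨1, h1⟩ hbddO
  have hm₁pos : 0 < m₁ := hm₁mem.2.pos
  -- m₁ < a
  have hm₁lt : m₁ < a := by
    have : m₁ ∈ {d | d ∣ m₁ * a ∧ d < a} := hdiv ▸ hm₁mem
    exact this.2
  -- a ≥ 2
  have hE : (evens (lspec n)).Nonempty := by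
    have hne : (odds (lspec n)).encard ≠ 0 := by
      rw [Set.encard_ne_zero]; exact ⟨1, h1⟩
    rw [← Set.encard_ne_zero]
    rwa [hb]
  have hEmem : sSup (evens (lspec n)) ∈ evens (lspec n) := Nat.sSup_mem hE hbddE
  have hE2 : 2 ≤ sSup (evens (lspec n)) := by
    rcases hEmem with ⟨⟨hpos, _⟩, heven⟩
    rcases heven with ⟨k, hk⟩
    omega
  have ha2 : 2 ≤ a := by omega
  have hapos : 0 < a := by omega
  -- b, c < a
  have hblt : b < a := ((hdiv ▸ hb1 : b ∈ {d | d ∣ m₁ * a ∧ d < a})).2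
  have hclt : c < a := ((hdiv ▸ hc1 : c ∈ {d | d ∣ m₁ * a ∧ d < a})).2
  -- a not prime
  have hnp : ¬ a.Prime := by
    intro hp
    rcases (Nat.Prime.eq_one_or_self_of_dvd hp b ⟨c, habc⟩) with hb' | hb'
    · subst hb'; omega
    · omega
  refine ⟨⟨a.minFac, Nat.minFac_prime (by omega), Nat.minFac_dvd a, ?_⟩, hnp, ?_, ?_, ?_⟩
  · have hle : a.minFac ≤ a := Nat.minFac_le hapos
    rcases lt_or_eq_of_le hle with h | h
    · exact h
    · exact absurd (h ▸ Nat.minFac_prime (by omega : a ≠ 1)) hnp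
  · intro d hd hdne
    have : d ∈ {x | x ∣ m₁ * a ∧ x < a} :=
      ⟨hd.mul_left m₁, lt_of_le_of_ne (Nat.le_of_dvd hapos hd) hdne⟩
    exact hdiv ▸ this
  · exact ⟨m₁, a, hm₁pos, le_of_lt hm₁lt, rfl, rfl⟩
  · rintro r ⟨m, m', hm, hmm', heq, rfl⟩
    have hmle : m ≤ m₁ := by
      rcases lt_or_ge m a with hlt | hge
      · have hmem : m ∈ {d | d ∣ m₁ * a ∧ d < a} := ⟨Dvd.intro m' heq, hlt⟩
        exact le_csSup hbddO (hdiv ▸ hmem)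
      · exfalso
        have : m₁ * a < m * m' := by
          calc m₁ * a < a * a := by
                exact (Nat.mul_lt_mul_right hapos).mpr hm₁lt
            _ ≤ m * m' := Nat.mul_le_mul hge (le_trans hge hmm')
        omega
    have hkey : a * m ≤ m₁ * m' := by
      have h2 : a * m * m ≤ m₁ * m' * m := by
        calc a * m * m = a * (m * m) := by ring
          _ ≤ a * (m₁ * m₁) := Nat.mul_le_mul_left _ (Nat.mul_le_mul hmle hmle)
          _ = m₁ * (m₁ * a) := by ring
          _ = m₁ * (m * m') := by rw [heq]
          _ = m₁ * m' * m := by ring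
      exact Nat.le_of_mul_le_mul_right h2 hm
    rw [div_le_div_iff₀ (by exact_mod_cast hm₁pos) (by exact_mod_cast hm)]
    have : ((a * m : ℕ) : ℚ) ≤ ((m₁ * m' : ℕ) : ℚ) := by exact_mod_cast hkey
    push_cast at this ⊢
    linarith
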